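/- Fix α, β > −1 and let P_k^{(α,β)} denote the Jacobi polynomials. If p(x) = Σ_{k=0}^n a_k P_k^{(α,β)}(x) is a real polynomial, then Z_C(Σ_{k=0}^n k(k+1+α+β) a_k P_k^{(α,β)}(x)) ≤ Z_C(p), i.e., the sequence {k(k+1+α+β)}_{k=0}^∞ is a complex zero decreasing sequence for the Jacobi basis. -/

import Mathlib

open Polynomial Finset

open scoped Classical in
/-- Number of non-real complex zeros of a real polynomial, counted with multiplicity. -/
noncomputable def ZC (p : Polynomial ℝ) : ℕ :=
  (((p.map (algebraMap ℝ ℂ)).roots).filter (fun z => z.im ≠ 0)).card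

/-- Number of real zeros of a real polynomial, counted with multiplicity. -/
noncomputable def ZR (p : Polynomial ℝ) : ℕ := p.roots.card

open scoped Classical

lemma count_add_count_le_card {γ : Type*} [DecidableEq γ] (U : Multiset γ) {a b : γ} (h : a ≠ b) :
    U.count a + U.count b ≤ Multiset.card U := by
  induction U using Multiset.induction_on with
  | empty => simp
  | cons y s ih =>
      simp only [Multiset.count_cons, Multiset.card_cons]
      split_ifs with h1 h2 <;> try omega
      exact absurd (h1.trans h2.symm) h

lemma zc_zr (r : Polynomial ℝ) (hr : r ≠ 0) :
    (((r.map (algebraMap ℝ ℂ)).roots).filter (fun z => z.im ≠ 0)).card + r.roots.card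
      = r.natDegree := by
  have hmap : r.map (algebraMap ℝ ℂ) ≠ 0 := Polynomial.map_ne_zero hr
  have htot : r.natDegree = Multiset.card (r.map (algebraMap ℝ ℂ)).roots :=
    (Polynomial.natDegree_map (algebraMap ℝ ℂ)).symm.trans (IsAlgClosed.splits _).natDegree_eq_card_roots
  have hsplit := Multiset.filter_add_not (fun z : ℂ => z.im ≠ 0) (r.map (algebraMap ℝ ℂ)).roots
  have hreal : (r.map (algebraMap ℝ ℂ)).roots.filter (fun z => ¬ z.im ≠ 0)
      = r.roots.map (fun x : ℝ => (x : ℂ)) := by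
    ext z
    by_cases him : z.im = 0
    · obtain ⟨x, rfl⟩ : ∃ x : ℝ, z = (x : ℂ) := ⟨z.re, by apply Complex.ext <;> simp [him]⟩
      rw [Multiset.count_filter_of_pos (by simp)]
      rw [Multiset.count_map_eq_count' _ _ Complex.ofReal_injective]
      rw [Polynomial.count_roots, Polynomial.count_roots]
      exact (Polynomial.eq_rootMultiplicity_map (f := algebraMap ℝ ℂ)
        (by exact_mod_cast Complex.ofReal_injective) x).symm
    · rw [Multiset.count_filter_of_neg (by simp [him])]
      symm
      rw [Multiset.count_eq_zero]
      intro hmem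
      obtain ⟨x, _, rfl⟩ := Multiset.mem_map.1 hmem
      simp at him
  have := congrArg Multiset.card hsplit
  rw [Multiset.card_add, hreal, Multiset.card_map] at this
  omega

lemma rolle_count_aux (q : Polynomial ℝ) (hq : q ≠ 0) (F : ℝ → ℝ) (hF : Continuous F)
    (S : Finset ℝ) (hFS : ∀ x ∈ S, F x = 0)
    (hd : ∀ c : ℝ, c ∉ S → ∃ K : ℝ, K ≠ 0 ∧ HasDerivAt F (K * q.eval c) c) :
    ∀ S' : Finset ℝ, S' ⊆ S →
      (∀ hne : S'.Nonempty, ∀ x ∈ S, x ≤ S'.max' hne → x ∈ S') →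
      ∀ hne : S'.Nonempty,
      ∑ x ∈ S', q.rootMultiplicity x + (S'.card - 1)
        ≤ Multiset.card (q.roots.filter (· ≤ S'.max' hne)) := by
  intro S'
  induction S' using Finset.strongInduction with
  | _ S' ih =>
    intro hsub hinit hne
    set M := S'.max' hne with hM
    by_cases hT : (S'.erase M).Nonempty
    · set T := S'.erase M with hTdef
      have hMmem : M ∈ S' := S'.max'_mem hne
      have hTsub : T ⊆ S' := Finset.erase_subset _ _
      set M' := T.max' hT with hM'
      have hM'T : M' ∈ T := T.max'_mem hT
      have hM'S' : M' ∈ S' := hTsub hM'T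
      have hM'M : M' < M := lt_of_le_of_ne (S'.le_max' _ hM'S') (Finset.mem_erase.1 hM'T).1
      -- points in the open interval are not in S
      have hnotS : ∀ x ∈ Set.Ioo M' M, x ∉ S := by
        intro x hx hxS
        have hxS' : x ∈ S' := hinit hne x hxS hx.2.le
        have hxT : x ∈ T := Finset.mem_erase.2 ⟨ne_of_lt hx.2, hxS'⟩
        exact absurd (T.le_max' _ hxT) (not_le.2 hx.1)
      -- global derivative function
      have hKfun : ∀ x : ℝ, ∃ K : ℝ, x ∉ S → K ≠ 0 ∧ HasDerivAt F (K * q.eval x) x := by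
        intro x
        by_cases hx : x ∈ S
        · exact ⟨1, fun h => absurd hx h⟩
        · obtain ⟨K, hK⟩ := hd x hx
          exact ⟨K, fun _ => hK⟩
      choose K hK using hKfun
      obtain ⟨c, hc, hc0⟩ := exists_hasDerivAt_eq_zero (f := F)
        (f' := fun x => K x * q.eval x) hM'M hF.continuousOn
        ((hFS M' (hsub hM'S')).trans (hFS M (hsub hMmem)).symm)
        (fun x hx => (hK x (hnotS x hx)).2)
      have hcq : q.eval c = 0 := by
        rcases mul_eq_zero.1 hc0 with h | h
        · exact absurd h (hK c (hnotS c hc)).1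
        · exact h
      have hccount : 1 ≤ q.roots.count c := by
        rw [Polynomial.count_roots]
        exact (Polynomial.rootMultiplicity_pos hq).2 hcq
      -- multiset counting
      have hfsplit : Multiset.card (q.roots.filter (· ≤ M))
          = Multiset.card (q.roots.filter (· ≤ M'))
            + Multiset.card (q.roots.filter (fun x => M' < x ∧ x ≤ M)) := by
        have h1 := Multiset.filter_add_filter (· ≤ M') (fun x => M' < x ∧ x ≤ M) q.roots
        have h2 : Multiset.filter (fun a => a ≤ M' ∨ (M' < a ∧ a ≤ M)) q.roots
            = Multiset.filter (· ≤ M) q.roots := by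
          apply Multiset.filter_congr
          intro x _
          constructor
          · rintro (h | ⟨_, h⟩)
            · exact h.trans hM'M.le
            · exact h
          · intro hxM
            rcases le_or_gt x M' with h | h
            · exact Or.inl h
            · exact Or.inr ⟨h, hxM⟩
        have h3 : Multiset.filter (fun a => a ≤ M' ∧ (M' < a ∧ a ≤ M)) q.roots = 0 := by
          rw [Multiset.filter_eq_nil]
          rintro x _ ⟨h1', h2', _⟩
          exact absurd h1' (not_le.2 h2')
        have := congrArg Multiset.card h1
        rw [h2, h3, add_zero, Multiset.card_add] at this
        omega
      have hmid : q.roots.count c + q.roots.count M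
          ≤ Multiset.card (q.roots.filter (fun x => M' < x ∧ x ≤ M)) := by
        have e1 : (q.roots.filter (fun x => M' < x ∧ x ≤ M)).count c = q.roots.count c :=
          Multiset.count_filter_of_pos ⟨hc.1, hc.2.le⟩
        have e2 : (q.roots.filter (fun x => M' < x ∧ x ≤ M)).count M = q.roots.count M :=
          Multiset.count_filter_of_pos ⟨hM'M, le_refl M⟩
        have := count_add_count_le_card (q.roots.filter (fun x => M' < x ∧ x ≤ M)) (ne_of_lt hc.2)
        rw [e1, e2] at this
        exact this
      have hMc : q.roots.count M = q.rootMultiplicity M := Polynomial.count_roots q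
      -- induction hypothesis
      have hTS : T ⊂ S' := Finset.erase_ssubset hMmem
      have hTinit : ∀ hne' : T.Nonempty, ∀ x ∈ S, x ≤ T.max' hne' → x ∈ T := by
        intro hne' x hxS hxle
        have hxM' : x ≤ M' := hxle
        have hxS' : x ∈ S' := hinit hne x hxS (hxM'.trans hM'M.le)
        exact Finset.mem_erase.2 ⟨ne_of_lt (lt_of_le_of_lt hxM' hM'M), hxS'⟩
      have hIH := ih T hTS (hTsub.trans hsub) hTinit hT
      rw [← hM'] at hIH
      -- assemble
      have hsum : ∑ x ∈ T, q.rootMultiplicity x + q.rootMultiplicity M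
          = ∑ x ∈ S', q.rootMultiplicity x := Finset.sum_erase_add S' _ hMmem
      have hcard : S'.card = T.card + 1 := (Finset.card_erase_add_one hMmem).symm
      have hTpos : 1 ≤ T.card := Finset.card_pos.2 hT
      omega
    · -- S' is a singleton {M}
      rw [Finset.not_nonempty_iff_eq_empty] at hT
      have hS'M : S' = {M} := by
        rcases (Finset.erase_eq_empty_iff S' M).1 hT with h | h
        · exact absurd h (Finset.nonempty_iff_ne_empty.1 hne)
        · exact h
      have hsum : ∑ x ∈ S', q.rootMultiplicity x = q.rootMultiplicity M := by
        rw [hS'M, Finset.sum_singleton]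
      have hcard : S'.card = 1 := by rw [hS'M, Finset.card_singleton]
      rw [hsum, hcard]
      have h1 : (q.roots.filter (· ≤ M)).count M = q.roots.count M :=
        Multiset.count_filter_of_pos (le_refl M)
      have := Multiset.count_le_card M (q.roots.filter (· ≤ M))
      rw [h1, Polynomial.count_roots] at this
      omega

lemma rolle_count (q : Polynomial ℝ) (hq : q ≠ 0) (F : ℝ → ℝ) (hF : Continuous F)
    (S : Finset ℝ) (hFS : ∀ x ∈ S, F x = 0)
    (hd : ∀ c : ℝ, c ∉ S → ∃ K : ℝ, K ≠ 0 ∧ HasDerivAt F (K * q.eval c) c)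
    (hne : S.Nonempty) :
    ∑ x ∈ S, q.rootMultiplicity x + (S.card - 1) ≤ Multiset.card q.roots :=
  le_trans (rolle_count_aux q hq F hF S hFS hd S subset_rfl (fun _ x hx _ => hx) hne)
    (Multiset.card_le_card (Multiset.filter_le _ _))

-- multiplicity transfer
lemma rm_transfer (γ δ : ℝ) (u q : Polynomial ℝ) (hq : q ≠ 0)
    (hquq : q = (X ^ 2 - 1) * derivative u + (C γ * X + C δ) * u) (x : ℝ) :
    (if x = 1 ∨ x = -1 then u.rootMultiplicity x else u.rootMultiplicity x - 1)
      ≤ q.rootMultiplicity x := by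
  set μ := u.rootMultiplicity x with hμ
  have hdvdu : (X - C x) ^ μ ∣ u := Polynomial.pow_rootMultiplicity_dvd u x
  have hdvdu' : (X - C x) ^ (μ - 1) ∣ derivative u := by
    by_cases hu' : derivative u = 0
    · simp [hu']
    · exact dvd_trans (pow_dvd_pow _ (Polynomial.rootMultiplicity_sub_one_le_derivative_rootMultiplicity u x))
        (Polynomial.pow_rootMultiplicity_dvd _ x)
  split_ifs with hx
  · rcases Nat.eq_zero_or_pos μ with hμ0 | hμpos
    · simp [hμ0]
    have hXdvd : (X - C x) ∣ (X ^ 2 - 1 : Polynomial ℝ) := by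
      have : (X ^ 2 - 1 : Polynomial ℝ) = (X - C 1) * (X - C (-1)) := by
        simp only [map_one, map_neg]
        ring
      rw [this]
      rcases hx with rfl | rfl
      · exact Dvd.intro _ rfl
      · exact Dvd.intro_left _ rfl
    have h1 : (X - C x) ^ μ ∣ (X ^ 2 - 1) * derivative u := by
      have : (X - C x) ^ μ = (X - C x) * (X - C x) ^ (μ - 1) := by
        conv_lhs => rw [show μ = 1 + (μ - 1) by omega]
        rw [pow_add, pow_one]
      rw [this]
      exact mul_dvd_mul hXdvd hdvdu'
    have h2 : (X - C x) ^ μ ∣ (C γ * X + C δ) * u := Dvd.dvd.mul_left hdvdu _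
    rw [hquq] at hq ⊢
    exact (Polynomial.le_rootMultiplicity_iff hq).2 (dvd_add h1 h2)
  · have h1 : (X - C x) ^ (μ - 1) ∣ (X ^ 2 - 1) * derivative u := Dvd.dvd.mul_left hdvdu' _
    have h2 : (X - C x) ^ (μ - 1) ∣ (C γ * X + C δ) * u :=
      Dvd.dvd.mul_left (dvd_trans (pow_dvd_pow _ (Nat.sub_le μ 1)) hdvdu) _
    rw [hquq] at hq ⊢
    exact (Polynomial.le_rootMultiplicity_iff hq).2 (dvd_add h1 h2)

lemma ZR_step (α β : ℝ) (hα : -1 < α) (hβ : -1 < β) (u q : Polynomial ℝ)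
    (hu : u ≠ 0) (hq : q ≠ 0)
    (hquq : q = (X ^ 2 - 1) * derivative u + (C (2 + α + β) * X + C (α - β)) * u) :
    Multiset.card u.roots + 1 ≤ Multiset.card q.roots := by
  have hA0 : 0 < (α + 1) / 2 := by linarith
  have hB0 : 0 < (β + 1) / 2 := by linarith
  set F : ℝ → ℝ := fun x =>
    ((1 - x) ^ 2) ^ ((α + 1) / 2) * ((1 + x) ^ 2) ^ ((β + 1) / 2) * u.eval x with hFdef
  have hFcont : Continuous F := by
    refine Continuous.mul (Continuous.mul ?_ ?_) u.continuous
    · exact (Continuous.pow (by continuity) 2).rpow_const (fun x => Or.inr hA0.le)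
    · exact (Continuous.pow (by continuity) 2).rpow_const (fun x => Or.inr hB0.le)
  set S : Finset ℝ := insert (-1) (insert 1 u.roots.toFinset) with hSdef
  have h1S : (1 : ℝ) ∈ S := by simp [hSdef]
  have hm1S : (-1 : ℝ) ∈ S := by simp [hSdef]
  have hFS : ∀ x ∈ S, F x = 0 := by
    intro x hx
    rw [hSdef] at hx
    rcases Finset.mem_insert.1 hx with rfl | hx
    · norm_num [hFdef, Real.zero_rpow hB0.ne']
    rcases Finset.mem_insert.1 hx with rfl | hx
    · norm_num [hFdef, Real.zero_rpow hA0.ne']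
    · have hroot : u.IsRoot x := (Polynomial.mem_roots hu).1 (Multiset.mem_toFinset.1 hx)
      simp [hFdef, show u.eval x = 0 from hroot]
  have hd : ∀ c : ℝ, c ∉ S → ∃ K : ℝ, K ≠ 0 ∧ HasDerivAt F (K * q.eval c) c := by
    intro c hc
    have hc1 : c ≠ 1 := fun h => hc (h ▸ h1S)
    have hcm1 : c ≠ -1 := fun h => hc (h ▸ hm1S)
    have hP : ((1 - c) ^ 2 : ℝ) ≠ 0 := pow_ne_zero 2 (sub_ne_zero.2 (fun h => hc1 h.symm))
    have hQ : ((1 + c) ^ 2 : ℝ) ≠ 0 := by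
      apply pow_ne_zero 2
      intro h
      exact hcm1 (by linarith)
    have h1 : HasDerivAt (fun x : ℝ => ((1 - x) ^ 2) ^ ((α + 1) / 2))
        (((2 : ℕ) * (1 - c) ^ (2 - 1) * (-1)) * ((α + 1) / 2) * ((1 - c) ^ 2) ^ ((α + 1) / 2 - 1)) c :=
      (((hasDerivAt_id c).const_sub 1).pow 2).rpow_const (Or.inl hP)
    have h2 : HasDerivAt (fun x : ℝ => ((1 + x) ^ 2) ^ ((β + 1) / 2))
        (((2 : ℕ) * (1 + c) ^ (2 - 1) * 1) * ((β + 1) / 2) * ((1 + c) ^ 2) ^ ((β + 1) / 2 - 1)) c :=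
      (((hasDerivAt_id c).const_add 1).pow 2).rpow_const (Or.inl hQ)
    have h3 : HasDerivAt (fun x : ℝ => u.eval x) ((derivative u).eval c) c := u.hasDerivAt c
    have hD := (h1.mul h2).mul h3
    refine ⟨-(((1 - c) ^ 2) ^ ((α + 1) / 2 - 1) * ((1 + c) ^ 2) ^ ((β + 1) / 2 - 1) * (1 - c ^ 2)),
      ?_, ?_⟩
    · have e1 : (0 : ℝ) < ((1 - c) ^ 2) ^ ((α + 1) / 2 - 1) :=
        Real.rpow_pos_of_pos (lt_of_le_of_ne (sq_nonneg _) (Ne.symm hP)) _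
      have e2 : (0 : ℝ) < ((1 + c) ^ 2) ^ ((β + 1) / 2 - 1) :=
        Real.rpow_pos_of_pos (lt_of_le_of_ne (sq_nonneg _) (Ne.symm hQ)) _
      have e3 : (1 - c ^ 2 : ℝ) ≠ 0 := by
        intro h
        have : (1 - c) * (1 + c) = 0 := by ring_nf; linarith [h]
        rcases mul_eq_zero.1 this with h' | h'
        · exact hc1 (by linarith)
        · exact hcm1 (by linarith)
      intro h
      rcases mul_eq_zero.1 (neg_eq_zero.1 h) with h' | h'
      · rcases mul_eq_zero.1 h' with h'' | h''
        · exact e1.ne' h''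
        · exact e2.ne' h''
      · exact e3 h'
    · convert hD using 1
      on_goal 1 => rfl
      on_goal 1 => rfl
      on_goal 1 => rfl
      have ewA : ((1 - c) ^ 2 : ℝ) ^ ((α + 1) / 2)
          = ((1 - c) ^ 2) ^ ((α + 1) / 2 - 1) * (1 - c) ^ 2 := by
        have := Real.rpow_add_one hP ((α + 1) / 2 - 1)
        rwa [sub_add_cancel] at this
      have ewB : ((1 + c) ^ 2 : ℝ) ^ ((β + 1) / 2)
          = ((1 + c) ^ 2) ^ ((β + 1) / 2 - 1) * (1 + c) ^ 2 := by
        have := Real.rpow_add_one hQ ((β + 1) / 2 - 1)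
        rwa [sub_add_cancel] at this
      rw [hquq]
      simp only [eval_add, eval_mul, eval_sub, eval_pow, eval_one, eval_X, eval_C, Pi.mul_apply]
      rw [ewA, ewB]
      push_cast
      ring
  have hSne : S.Nonempty := ⟨1, h1S⟩
  have hmain := rolle_count q hq F hFcont S hFS hd hSne
  -- sum of u-multiplicities over S equals card of u.roots
  have hsub' : u.roots.toFinset ⊆ S := by
    intro x hx
    rw [hSdef]
    exact Finset.mem_insert_of_mem (Finset.mem_insert_of_mem hx)
  have hsum_u : ∑ x ∈ S, u.rootMultiplicity x = Multiset.card u.roots := by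
    rw [← Finset.sum_subset hsub' (fun x _ hx => Polynomial.rootMultiplicity_eq_zero
      (fun hroot => hx (Multiset.mem_toFinset.2 ((Polynomial.mem_roots hu).2 hroot))))]
    rw [← Multiset.toFinset_sum_count_eq u.roots]
    exact Finset.sum_congr rfl (fun x _ => (Polynomial.count_roots u).symm)
  -- pointwise comparison
  have hpoint : ∀ x ∈ S, u.rootMultiplicity x
      ≤ q.rootMultiplicity x + (if x = 1 ∨ x = -1 then 0 else 1) := by
    intro x _
    have := rm_transfer (2 + α + β) (α - β) u q hq hquq x
    split_ifs at this ⊢ <;> omega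
  have hsum_le : ∑ x ∈ S, u.rootMultiplicity x
      ≤ ∑ x ∈ S, q.rootMultiplicity x + ∑ x ∈ S, (if x = 1 ∨ x = -1 then 0 else 1) := by
    rw [← Finset.sum_add_distrib]
    exact Finset.sum_le_sum hpoint
  have hite : ∑ x ∈ S, (if x = 1 ∨ x = -1 then (0 : ℕ) else 1)
      = (S.filter (fun x => ¬(x = 1 ∨ x = -1))).card := by
    rw [Finset.card_filter]
    exact Finset.sum_congr rfl (fun x _ => by split_ifs with h <;> simp [h])
  have hfilter2 : (S.filter (fun x => x = 1 ∨ x = -1)) = ({1, -1} : Finset ℝ) := by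
    ext y
    simp only [Finset.mem_filter, Finset.mem_insert, Finset.mem_singleton]
    constructor
    · rintro ⟨_, h⟩; exact h
    · rintro (rfl | rfl)
      · exact ⟨h1S, Or.inl rfl⟩
      · exact ⟨hm1S, Or.inr rfl⟩
  have hcard2 : (S.filter (fun x => x = 1 ∨ x = -1)).card = 2 := by
    rw [hfilter2]
    rw [Finset.card_pair (by norm_num : (1 : ℝ) ≠ -1)]
  have hsplit : (S.filter (fun x => x = 1 ∨ x = -1)).card
      + (S.filter (fun x => ¬(x = 1 ∨ x = -1))).card = S.card :=
    Finset.card_filter_add_card_filter_not (s := S) (p := fun x => x = 1 ∨ x = -1)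
  omega

theorem stmt12 (α β : ℝ) (hα : -1 < α) (hβ : -1 < β)
    (P : ℕ → Polynomial ℝ) (hdeg : ∀ n, (P n).degree = n)
    (hde : ∀ n, (X ^ 2 - 1) * derivative (derivative (P n))
        + (C (2 + α + β) * X + C (α - β)) * derivative (P n)
        = C ((n : ℝ) * ((n : ℝ) + 1 + α + β)) * P n)
    (n : ℕ) (a : ℕ → ℝ) :
    ZC (∑ k ∈ Finset.range (n + 1), C ((k : ℝ) * ((k : ℝ) + 1 + α + β) * a k) * P k)
      ≤ ZC (∑ k ∈ Finset.range (n + 1), C (a k) * P k) := by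
  set p : Polynomial ℝ := ∑ k ∈ Finset.range (n + 1), C (a k) * P k with hp
  set q : Polynomial ℝ :=
    ∑ k ∈ Finset.range (n + 1), C ((k : ℝ) * ((k : ℝ) + 1 + α + β) * a k) * P k with hqdef
  have hd1 : derivative p = ∑ k ∈ Finset.range (n + 1), C (a k) * derivative (P k) := by
    rw [hp, derivative_sum]
    exact Finset.sum_congr rfl fun k _ => derivative_C_mul _ _
  have hd2 : derivative (derivative p)
      = ∑ k ∈ Finset.range (n + 1), C (a k) * derivative (derivative (P k)) := by
    rw [hd1, derivative_sum]
    exact Finset.sum_congr rfl fun k _ => derivative_C_mul _ _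
  have hq : q = (X ^ 2 - 1) * derivative (derivative p)
      + (C (2 + α + β) * X + C (α - β)) * derivative p := by
    rw [hd2, hd1, Finset.mul_sum, Finset.mul_sum, ← Finset.sum_add_distrib, hqdef]
    refine Finset.sum_congr rfl fun k _ => ?_
    rw [C_mul]
    linear_combination (-(C (a k)) : Polynomial ℝ) * hde k
  by_cases hu : derivative p = 0
  · have hq0 : q = 0 := by
      rw [hq, hu, derivative_zero, mul_zero, mul_zero, add_zero]
    rw [hq0]
    simp only [ZC, Polynomial.map_zero, Polynomial.roots_zero, Multiset.filter_zero,
      Multiset.card_zero]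
    exact Nat.zero_le _
  by_cases hq0 : q = 0
  · rw [hq0]
    simp only [ZC, Polynomial.map_zero, Polynomial.roots_zero, Multiset.filter_zero,
      Multiset.card_zero]
    exact Nat.zero_le _
  have hp0 : p ≠ 0 := fun h => hu (by rw [h, derivative_zero])
  have hpnd : p.natDegree ≠ 0 := by
    intro h0
    obtain ⟨c, hc⟩ := Polynomial.natDegree_eq_zero.1 h0
    exact hu (by rw [← hc, derivative_C])
  -- degree bound
  have hnd1 : ((X : Polynomial ℝ) ^ 2 - 1).natDegree = 2 := by
    have : ((X : Polynomial ℝ) ^ 2 - 1) = X ^ 2 - C 1 := by rw [map_one]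
    rw [this, Polynomial.natDegree_X_pow_sub_C]
  have hdp_lt : (derivative p).natDegree < p.natDegree := natDegree_derivative_lt hpnd
  have bound1 : ((X ^ 2 - 1) * derivative (derivative p)).natDegree ≤ p.natDegree := by
    by_cases h2 : derivative (derivative p) = 0
    · rw [h2, mul_zero]
      exact Nat.zero_le _
    · have hdnd : (derivative p).natDegree ≠ 0 := by
        intro h0
        obtain ⟨c, hc⟩ := Polynomial.natDegree_eq_zero.1 h0
        exact h2 (by rw [← hc, derivative_C])
      have l1 : (derivative (derivative p)).natDegree < (derivative p).natDegree :=
        natDegree_derivative_lt hdnd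
      have := Polynomial.natDegree_mul_le
        (p := (X : Polynomial ℝ) ^ 2 - 1) (q := derivative (derivative p))
      omega
  have bound2 : ((C (2 + α + β) * X + C (α - β)) * derivative p).natDegree ≤ p.natDegree := by
    have ht : ((C (2 + α + β) * X + C (α - β)) : Polynomial ℝ).natDegree ≤ 1 := by
      refine (Polynomial.natDegree_add_le _ _).trans ?_
      simp only [Polynomial.natDegree_C, Polynomial.natDegree_X]
      have := Polynomial.natDegree_C_mul_le (2 + α + β) (X : Polynomial ℝ)
      simp only [Polynomial.natDegree_X] at this
      omega
    have := Polynomial.natDegree_mul_le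
      (p := (C (2 + α + β) * X + C (α - β) : Polynomial ℝ)) (q := derivative p)
    omega
  have hdq : q.natDegree ≤ p.natDegree := by
    rw [hq]
    exact (Polynomial.natDegree_add_le _ _).trans (max_le bound1 bound2)
  have h1 := zc_zr q hq0
  have h2 := zc_zr p hp0
  have h3 := ZR_step α β hα hβ (derivative p) q hu hq0 hq
  have h4 := p.card_roots_le_derivative
  simp only [ZC]
  omega
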